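/- For all integers n ≥ 0 and k ≥ 0, the difference Δ²P_{n,k} := P(max(1, M_{n+2}) − S_{n+2} ≤ k) − P(max(1, M_n) − S_n ≤ k) satisfies Δ²P_{n,k} = p²·P(M_n = 0, S_n = −k) − q²·P(M_n ≤ 1, S_n = 1−k) − q²·P(M_n ≤ 2, S_n = 2−k). -/

import Mathlib

open Finset

/-- Probability weight of a single path of length `N`. -/
noncomputable def pathProb (p : ℝ) (N : ℕ) (x : Fin N → Bool) : ℝ :=
  p ^ (Finset.univ.filter (fun i => x i = true)).card *
    (1 - p) ^ (N - (Finset.univ.filter (fun i => x i = true)).card)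

open Classical in
/-- Probability of an event `E` for the `N`-step Bernoulli walk. -/
noncomputable def walkProb (p : ℝ) (N : ℕ) (E : Set (Fin N → Bool)) : ℝ :=
  ∑ x : Fin N → Bool, if x ∈ E then pathProb p N x else 0

/-- Partial sum `S_j` of the walk given by the path `x`. -/
def walkS (N : ℕ) (x : Fin N → Bool) (j : ℕ) : ℤ :=
  ∑ i ∈ Finset.univ.filter (fun i : Fin N => (i : ℕ) < j), (if x i then (1 : ℤ) else -1)

/-- Running maximum `M_N = max_{0 ≤ j ≤ N} S_j`. -/
def walkM (N : ℕ) (x : Fin N → Bool) : ℤ :=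
  (Finset.range (N + 1)).sup' Finset.nonempty_range_add_one (fun j => walkS N x j)

/-- `U_n(p) = P(M_n ≤ 1)`. -/
noncomputable def U (n : ℕ) (p : ℝ) : ℝ :=
  walkProb p n {x | walkM n x ≤ 1}

/- ### Auxiliary lemmas -/

lemma walkS_zero' (N : ℕ) (x : Fin N → Bool) : walkS N x 0 = 0 := by
  simp [walkS]

lemma walkS_succ' (n : ℕ) (x : Fin (n+1) → Bool) (j : ℕ) :
    walkS (n+1) x (j+1) = (if x 0 then (1:ℤ) else -1) + walkS n (fun i => x i.succ) j := by
  unfold walkS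
  rw [Finset.sum_filter, Finset.sum_filter, Fin.sum_univ_succ]
  simp [Nat.succ_lt_succ_iff]

lemma sup'_add_const' (s : Finset ℕ) (hs : s.Nonempty) (c : ℤ) (f : ℕ → ℤ) :
    s.sup' hs (fun j => c + f j) = c + s.sup' hs f := by
  apply le_antisymm
  · exact Finset.sup'_le _ _ fun j hj => add_le_add_right (Finset.le_sup' f hj) c
  · obtain ⟨j, hj, hje⟩ := Finset.exists_mem_eq_sup' hs f
    rw [hje]
    exact Finset.le_sup' (fun j => c + f j) hj

lemma walkM_succ' (n : ℕ) (x : Fin (n+1) → Bool) :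
    walkM (n+1) x = max 0 ((if x 0 then (1:ℤ) else -1) + walkM n (fun i => x i.succ)) := by
  unfold walkM
  have h1 : (range (n+1+1)).sup' Finset.nonempty_range_add_one (fun j => walkS (n+1) x j)
      = max (walkS (n+1) x 0) ((range (n+1)).sup' Finset.nonempty_range_add_one
          (fun j => walkS (n+1) x (j+1))) := by
    apply le_antisymm
    · apply Finset.sup'_le
      intro j hj
      match j with
      | 0 => exact le_max_left _ _
      | (i+1) =>
        refine le_trans ?_ (le_max_right _ _)
        exact Finset.le_sup' (fun j => walkS (n+1) x (j+1)) (by simp at hj ⊢; omega)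
    · apply max_le
      · exact Finset.le_sup' _ (by simp)
      · apply Finset.sup'_le
        intro j hj
        exact Finset.le_sup' _ (by simp at hj ⊢; omega)
  rw [h1, walkS_zero']
  congr 1
  rw [show (fun j => walkS (n+1) x (j+1))
      = fun j => (if x 0 then (1:ℤ) else -1) + walkS n (fun i => x i.succ) j
      from funext (walkS_succ' n x)]
  exact sup'_add_const' _ _ _ _

lemma walkS_cons' (n : ℕ) (b : Bool) (y : Fin n → Bool) (j : ℕ) :
    walkS (n+1) (Fin.cons b y) (j+1) = (if b then (1:ℤ) else -1) + walkS n y j := by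
  rw [walkS_succ']
  simp [Fin.cons_succ]

lemma walkM_cons' (n : ℕ) (b : Bool) (y : Fin n → Bool) :
    walkM (n+1) (Fin.cons b y) = max 0 ((if b then (1:ℤ) else -1) + walkM n y) := by
  rw [walkM_succ']
  simp [Fin.cons_succ]

lemma walkS_cons2' (n : ℕ) (b1 b2 : Bool) (y : Fin n → Bool) :
    walkS (n+2) (Fin.cons b1 (Fin.cons b2 y)) (n+2)
      = (if b1 then (1:ℤ) else -1) + ((if b2 then (1:ℤ) else -1) + walkS n y n) := by
  show walkS (n+1+1) (Fin.cons b1 (Fin.cons b2 y)) ((n+1)+1) = _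
  rw [walkS_cons', walkS_cons']

lemma walkM_cons2' (n : ℕ) (b1 b2 : Bool) (y : Fin n → Bool) :
    walkM (n+2) (Fin.cons b1 (Fin.cons b2 y))
      = max 0 ((if b1 then (1:ℤ) else -1) + max 0 ((if b2 then (1:ℤ) else -1) + walkM n y)) := by
  show walkM (n+1+1) (Fin.cons b1 (Fin.cons b2 y)) = _
  rw [walkM_cons', walkM_cons']

lemma walkM_nonneg' (n : ℕ) (y : Fin n → Bool) : 0 ≤ walkM n y := by
  have h := Finset.le_sup' (fun j => walkS n y j) (Finset.mem_range.mpr (Nat.succ_pos n))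
  rw [walkS_zero'] at h
  exact h

lemma pathProb_eq_prod' (p : ℝ) (N : ℕ) (x : Fin N → Bool) :
    pathProb p N x = ∏ i : Fin N, (if x i then p else 1 - p) := by
  rw [← Finset.prod_filter_mul_prod_filter_not Finset.univ (fun i => x i = true)]
  rw [Finset.prod_congr rfl (fun i hi => if_pos (Finset.mem_filter.mp hi).2),
      Finset.prod_congr rfl (fun i hi => if_neg (by simpa using (Finset.mem_filter.mp hi).2)),
      Finset.prod_const, Finset.prod_const, pathProb]
  congr 1
  congr 1
  have := Finset.card_filter_add_card_filter_not
    (s := (Finset.univ : Finset (Fin N))) (p := fun i => x i = true)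
  simp at this ⊢
  omega

lemma pathProb_cons' (p : ℝ) (n : ℕ) (b : Bool) (y : Fin n → Bool) :
    pathProb p (n+1) (Fin.cons b y) = (if b then p else 1 - p) * pathProb p n y := by
  rw [pathProb_eq_prod', pathProb_eq_prod', Fin.prod_univ_succ]
  simp

lemma sum_cons_decomp' (n : ℕ) (F : (Fin (n+1) → Bool) → ℝ) :
    ∑ x : Fin (n+1) → Bool, F x = ∑ b : Bool, ∑ y : Fin n → Bool, F (Fin.cons b y) := by
  rw [← (Fin.consEquiv (fun _ => Bool)).sum_comp F, Fintype.sum_prod_type]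
  rfl

lemma sum_cons_decomp2' (n : ℕ) (F : (Fin (n+2) → Bool) → ℝ) :
    ∑ x : Fin (n+2) → Bool, F x
      = ∑ y : Fin n → Bool, ∑ b1 : Bool, ∑ b2 : Bool, F (Fin.cons b1 (Fin.cons b2 y)) := by
  have h0 : ∑ x : Fin (n+2) → Bool, F x
      = ∑ b1 : Bool, ∑ b2 : Bool, ∑ y : Fin n → Bool, F (Fin.cons b1 (Fin.cons b2 y)) := by
    rw [show (∑ x : Fin (n+2) → Bool, F x) = ∑ x : Fin (n+1+1) → Bool, F x from rfl,
      sum_cons_decomp' (n+1) F]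
    exact Finset.sum_congr rfl fun b1 _ =>
      sum_cons_decomp' n (fun y => F (Fin.cons b1 y))
  rw [h0]
  have h1 : ∀ b1 : Bool, (∑ b2 : Bool, ∑ y : Fin n → Bool, F (Fin.cons b1 (Fin.cons b2 y)))
      = ∑ y : Fin n → Bool, ∑ b2 : Bool, F (Fin.cons b1 (Fin.cons b2 y)) :=
    fun b1 => Finset.sum_comm
  simp_rw [h1]
  exact Finset.sum_comm

set_option maxHeartbeats 1000000 in
/-- `Δ²P_{n,k} = p²·P(M_n = 0, S_n = −k) − q²·P(M_n ≤ 1, S_n = 1−k) − q²·P(M_n ≤ 2, S_n = 2−k)`. -/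
theorem deltaSqP_formula (p : ℝ) (hp : p ∈ Set.Ioo (0 : ℝ) 1) (n k : ℕ) :
    walkProb p (n + 2) {x | max 1 (walkM (n + 2) x) - walkS (n + 2) x (n + 2) ≤ (k : ℤ)} -
      walkProb p n {x | max 1 (walkM n x) - walkS n x n ≤ (k : ℤ)} =
    p ^ 2 * walkProb p n {x | walkM n x = 0 ∧ walkS n x n = -(k : ℤ)} -
      (1 - p) ^ 2 * walkProb p n {x | walkM n x ≤ 1 ∧ walkS n x n = 1 - (k : ℤ)} -
      (1 - p) ^ 2 * walkProb p n {x | walkM n x ≤ 2 ∧ walkS n x n = 2 - (k : ℤ)} := by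
  classical
  set E2 : Set (Fin (n+2) → Bool) :=
    {x | max 1 (walkM (n + 2) x) - walkS (n + 2) x (n + 2) ≤ (k : ℤ)} with hE2
  have hL : walkProb p (n+2) E2
      = ∑ y : Fin n → Bool, ∑ b1 : Bool, ∑ b2 : Bool,
          (@ite _ (Fin.cons b1 (Fin.cons b2 y) ∈ E2) (Classical.propDecidable _)
            ((if b1 then p else 1 - p) * ((if b2 then p else 1 - p) * pathProb p n y)) 0) := by
    rw [walkProb, sum_cons_decomp2' n]
    refine Finset.sum_congr rfl fun y _ => Finset.sum_congr rfl fun b1 _ =>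
      Finset.sum_congr rfl fun b2 _ => ?_
    have : pathProb p (n+2) (Fin.cons b1 (Fin.cons b2 y))
        = (if b1 then p else 1 - p) * ((if b2 then p else 1 - p) * pathProb p n y) := by
      show pathProb p (n+1+1) (Fin.cons b1 (Fin.cons b2 y)) = _
      rw [pathProb_cons', pathProb_cons']
    rw [this]
  rw [hL]
  rw [walkProb, walkProb, walkProb, walkProb]
  rw [Finset.mul_sum, Finset.mul_sum, Finset.mul_sum,
    ← Finset.sum_sub_distrib, ← Finset.sum_sub_distrib, ← Finset.sum_sub_distrib]
  refine Finset.sum_congr rfl fun y _ => ?_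
  have hm : 0 ≤ walkM n y := walkM_nonneg' n y
  simp only [hE2, Set.mem_setOf_eq, Fintype.sum_bool, walkM_cons2', walkS_cons2',
    if_true, if_false, Bool.false_eq_true, ite_true, ite_false]
  set m := walkM n y
  set s := walkS n y n
  set c := pathProb p n y
  split_ifs <;> first | ring1 | (exfalso; omega)
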